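/- Under hypotheses (H.1) and (H.2), the averaged noise over the tree converges: (1/|T_n|) Σ_{k ∈ T_{n,p}} ε_k → 0 almost surely as n → ∞. -/

import Mathlib

open MeasureTheory ProbabilityTheory Filter Matrix Topology
open scoped Kronecker

noncomputable section

namespace BARpaper

/-- The `n`-th generation `G_n = {2^n, ..., 2^(n+1)-1}` of the binary tree. -/
def gen (n : ℕ) : Finset ℕ := Finset.Ico (2 ^ n) (2 ^ (n + 1))

/-- The tree `T_n` of all individuals up to generation `n`; `|T_n| = 2^(n+1)-1`. -/
def tree (n : ℕ) : Finset ℕ := Finset.Icc 1 (2 ^ (n + 1) - 1)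

/-- `T_{n,q}`: individuals of the tree `T_n` with label at least `2^q`. -/
def treeFrom (n q : ℕ) : Finset ℕ := (tree n).filter fun k => 2 ^ q ≤ k

/-- Companion matrix with first row `c 1, ..., c p`, ones on the subdiagonal,
zeros elsewhere. -/
def companion (p : ℕ) (c : ℕ → ℝ) : Matrix (Fin p) (Fin p) ℝ :=
  Matrix.of fun i j =>
    if (i : ℕ) = 0 then c ((j : ℕ) + 1) else if (j : ℕ) + 1 = (i : ℕ) then 1 else 0

variable {Ω : Type*}

/-- The σ-algebra `F_n` generated by the `X_k`, `k ∈ T_n`. -/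
def sigTree [MeasurableSpace Ω] (X : ℕ → Ω → ℝ) (n : ℕ) : MeasurableSpace Ω :=
  ⨆ k ∈ tree n, MeasurableSpace.comap (X k) inferInstance

/-- The regression vector `𝕏_n = (X_n, X_{⌊n/2⌋}, ..., X_{⌊n/2^(p-1)⌋})`. -/
def regVec (X : ℕ → Ω → ℝ) (p n : ℕ) (ω : Ω) : Fin p → ℝ :=
  fun i => X (n / 2 ^ (i : ℕ)) ω

/-- `Y_n = (1, 𝕏_nᵗ)ᵗ ∈ ℝ^(p+1)`. -/
def Yvec (X : ℕ → Ω → ℝ) (p n : ℕ) (ω : Ω) : Fin (p + 1) → ℝ :=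
  Fin.cons 1 (regVec X p n ω)

/-- The design matrix `S_n = Σ_{k ∈ T_{n,p-1}} Y_k Y_kᵗ`. -/
def Smat (X : ℕ → Ω → ℝ) (p n : ℕ) (ω : Ω) : Matrix (Fin (p + 1)) (Fin (p + 1)) ℝ :=
  ∑ k ∈ treeFrom n (p - 1), vecMulVec (Yvec X p k ω) (Yvec X p k ω)

/-- The martingale `M_n = Σ_{k ∈ T_{n-1,p-1}} (ε_{2k} Y_kᵗ, ε_{2k+1} Y_kᵗ)ᵗ ∈ ℝ^(2(p+1))`. -/
def Mvec (X ε : ℕ → Ω → ℝ) (p n : ℕ) (ω : Ω) : Fin 2 × Fin (p + 1) → ℝ :=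
  ∑ k ∈ treeFrom (n - 1) (p - 1), fun ij => ε (2 * k + (ij.1 : ℕ)) ω * Yvec X p k ω ij.2

/-- `Σ_n = I_2 ⊗ S_n`. -/
def Sigmat (X : ℕ → Ω → ℝ) (p n : ℕ) (ω : Ω) :
    Matrix (Fin 2 × Fin (p + 1)) (Fin 2 × Fin (p + 1)) ℝ :=
  (1 : Matrix (Fin 2) (Fin 2) ℝ) ⊗ₖ Smat X p n ω

/-- The normalized martingale quadratic form `M_nᵗ Σ_{n-1}⁻¹ M_n`. -/
def quadM (X ε : ℕ → Ω → ℝ) (p n : ℕ) (ω : Ω) : ℝ :=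
  Mvec X ε p n ω ⬝ᵥ ((Sigmat X p (n - 1) ω)⁻¹).mulVec (Mvec X ε p n ω)

/-- The parameter `θ = (a_0, ..., a_p, b_0, ..., b_p)`. -/
def thetaVec (p : ℕ) (a b : ℕ → ℝ) : Fin 2 × Fin (p + 1) → ℝ :=
  fun ij => if ij.1 = 0 then a (ij.2 : ℕ) else b (ij.2 : ℕ)

/-- The least squares estimator
`θ̂_n = (I_2 ⊗ S_{n-1}⁻¹) Σ_{k ∈ T_{n-1,p-1}} (X_{2k} Y_kᵗ, X_{2k+1} Y_kᵗ)ᵗ`. -/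
def thetaHat (X : ℕ → Ω → ℝ) (p n : ℕ) (ω : Ω) : Fin 2 × Fin (p + 1) → ℝ :=
  ((1 : Matrix (Fin 2) (Fin 2) ℝ) ⊗ₖ (Smat X p (n - 1) ω)⁻¹).mulVec
    (∑ k ∈ treeFrom (n - 1) (p - 1), fun ij => X (2 * k + (ij.1 : ℕ)) ω * Yvec X p k ω ij.2)

/-- The residuals `ε̂_{2k+e}` (for `e = 0, 1`), computed with the estimator `θ̂_m`
where `m = r_k` is the generation of `k`. -/
def epsHat (X : ℕ → Ω → ℝ) (p : ℕ) (e : Fin 2) (k : ℕ) (ω : Ω) : ℝ :=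
  X (2 * k + (e : ℕ)) ω - ∑ j, thetaHat X p (Nat.log 2 k) ω (e, j) * Yvec X p k ω j

/-- The variance estimator `σ̂²_n`. -/
def sigHat (X : ℕ → Ω → ℝ) (p n : ℕ) (ω : Ω) : ℝ :=
  (2 * ((tree (n - 1)).card : ℝ))⁻¹ *
    ∑ k ∈ treeFrom (n - 1) (p - 1), (epsHat X p 0 k ω ^ 2 + epsHat X p 1 k ω ^ 2)

/-- `σ²_n`, the analogue of `σ̂²_n` built from the true noise. -/
def sigBar (ε : ℕ → Ω → ℝ) (p n : ℕ) (ω : Ω) : ℝ :=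
  (2 * ((tree (n - 1)).card : ℝ))⁻¹ *
    ∑ k ∈ treeFrom (n - 1) p, (ε (2 * k) ω ^ 2 + ε (2 * k + 1) ω ^ 2)

/-- The covariance estimator `ρ̂_n`. -/
def rhoHat (X : ℕ → Ω → ℝ) (p n : ℕ) (ω : Ω) : ℝ :=
  ((tree (n - 1)).card : ℝ)⁻¹ *
    ∑ k ∈ treeFrom (n - 1) (p - 1), epsHat X p 0 k ω * epsHat X p 1 k ω

/-- `ρ_n`, the analogue of `ρ̂_n` built from the true noise. -/
def rhoBar (ε : ℕ → Ω → ℝ) (p n : ℕ) (ω : Ω) : ℝ :=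
  ((tree (n - 1)).card : ℝ)⁻¹ * ∑ k ∈ treeFrom (n - 1) p, ε (2 * k) ω * ε (2 * k + 1) ω

/-- `e_1 = (1, 0, ..., 0)ᵗ ∈ ℝ^p`. -/
def e1 (p : ℕ) : Fin p → ℝ := fun i => if (i : ℕ) = 0 then 1 else 0

/-- `λ = ā (I_p − Ā)⁻¹ e_1` with `ā = (a_0 + b_0)/2` and `Ā = (A + B)/2`. -/
def lamVec (p : ℕ) (a b : ℕ → ℝ) : Fin p → ℝ :=
  ((a 0 + b 0) / 2) •
    ((1 - (1 / 2 : ℝ) • (companion p a + companion p b))⁻¹).mulVec (e1 p)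

/-- The matrix `T = (σ² + a̅²) e_1 e_1ᵗ + ½(a_0(Aλe_1ᵗ + e_1λᵗAᵗ) + b_0(Bλe_1ᵗ + e_1λᵗBᵗ))`. -/
def Tmat (p : ℕ) (a b : ℕ → ℝ) (σ2 : ℝ) : Matrix (Fin p) (Fin p) ℝ :=
  (σ2 + (a 0 ^ 2 + b 0 ^ 2) / 2) • vecMulVec (e1 p) (e1 p) +
    (1 / 2 : ℝ) •
      (a 0 • (vecMulVec ((companion p a).mulVec (lamVec p a b)) (e1 p) +
          vecMulVec (e1 p) ((companion p a).mulVec (lamVec p a b))) +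
        b 0 • (vecMulVec ((companion p b).mulVec (lamVec p a b)) (e1 p) +
          vecMulVec (e1 p) ((companion p b).mulVec (lamVec p a b))))

/-- `l` solves the fixed point equation `ℓ = T + ½(A ℓ Aᵗ + B ℓ Bᵗ)`. -/
def IsEll (p : ℕ) (a b : ℕ → ℝ) (σ2 : ℝ) (l : Matrix (Fin p) (Fin p) ℝ) : Prop :=
  l = Tmat p a b σ2 + (1 / 2 : ℝ) •
      (companion p a * l * (companion p a)ᵀ + companion p b * l * (companion p b)ᵀ)

/-- The block matrix `L = [[1, λᵗ], [λ, ℓ]]`. -/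
def Lmat (p : ℕ) (a b : ℕ → ℝ) (l : Matrix (Fin p) (Fin p) ℝ) :
    Matrix (Fin (p + 1)) (Fin (p + 1)) ℝ :=
  Matrix.of (Fin.cons (Fin.cons 1 (lamVec p a b)) fun i => Fin.cons (lamVec p a b i) (l i))

/-- The covariance matrix `Γ = [[σ², ρ], [ρ, σ²]]`. -/
def gammaMat (σ2 ρ : ℝ) : Matrix (Fin 2) (Fin 2) ℝ := !![σ2, ρ; ρ, σ2]

/-- The BAR(`p`) model: dynamics, measurability, moments of the initial states and
the contraction assumption `max(‖A‖, ‖B‖) < 1` (operator norms). -/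
def BARmodel [MeasurableSpace Ω] (μ : Measure Ω) (X ε : ℕ → Ω → ℝ) (p : ℕ)
    (a b : ℕ → ℝ) : Prop :=
  1 ≤ p ∧ (∀ k, Measurable (X k)) ∧ (∀ k, Measurable (ε k)) ∧
    (∀ n, 2 ^ (p - 1) ≤ n → ∀ ω,
      X (2 * n) ω =
          a 0 + (∑ k ∈ Finset.Icc 1 p, a k * X (n / 2 ^ (k - 1)) ω) + ε (2 * n) ω ∧
        X (2 * n + 1) ω =
          b 0 + (∑ k ∈ Finset.Icc 1 p, b k * X (n / 2 ^ (k - 1)) ω) + ε (2 * n + 1) ω) ∧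
    (∀ k, 1 ≤ k → k ≤ 2 ^ (p - 1) - 1 → MemLp (X k) 8 μ) ∧
    ‖toEuclideanCLM (𝕜 := ℝ) (companion p a)‖ < 1 ∧
    ‖toEuclideanCLM (𝕜 := ℝ) (companion p b)‖ < 1

/-- Hypothesis (H.1). -/
def H1 [MeasurableSpace Ω] (μ : Measure Ω) (X ε : ℕ → Ω → ℝ) (p : ℕ) (σ2 : ℝ) : Prop :=
  0 < σ2 ∧ ∀ n, p - 1 ≤ n → ∀ k ∈ gen (n + 1),
    MemLp (ε k) 2 μ ∧ μ[ε k|sigTree X n] =ᵐ[μ] 0 ∧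
      μ[fun ω => ε k ω ^ 2|sigTree X n] =ᵐ[μ] fun _ => σ2

/-- Hypothesis (H.2). -/
def H2 [m0 : MeasurableSpace Ω] [StandardBorelSpace Ω] (μ : Measure Ω) [IsFiniteMeasure μ]
    (X ε : ℕ → Ω → ℝ) (p : ℕ) (σ2 ρ : ℝ) (hsig : ∀ n, sigTree X n ≤ m0) : Prop :=
  |ρ| < σ2 ∧ ∀ n, p - 1 ≤ n → ∀ k ∈ gen (n + 1), ∀ l ∈ gen (n + 1), k ≠ l →
    (k / 2 = l / 2 → μ[fun ω => ε k ω * ε l ω|sigTree X n] =ᵐ[μ] fun _ => ρ) ∧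
      (k / 2 ≠ l / 2 → CondIndepFun (sigTree X n) (hsig n) (ε k) (ε l) μ)

/-- Hypothesis (H.3). -/
def H3 [MeasurableSpace Ω] (μ : Measure Ω) (X ε : ℕ → Ω → ℝ) (p : ℕ) : Prop :=
  (∀ n, p - 1 ≤ n → ∀ k ∈ gen (n + 1), MemLp (ε k) 4 μ) ∧
    ∀ᵐ ω ∂μ, BddAbove {x : ℝ | ∃ n, p - 1 ≤ n ∧ ∃ k ∈ gen (n + 1),
      x = (μ[fun ω' => ε k ω' ^ 4|sigTree X n]) ω}

/-- Hypothesis (H.4). -/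
def H4 [MeasurableSpace Ω] (μ : Measure Ω) (X ε : ℕ → Ω → ℝ) (p : ℕ) (τ4 ν2 : ℝ) : Prop :=
  0 < τ4 ∧ ν2 < τ4 ∧
    (∀ n, p - 1 ≤ n → ∀ k ∈ gen (n + 1),
      μ[fun ω => ε k ω ^ 4|sigTree X n] =ᵐ[μ] fun _ => τ4) ∧
    ∀ n, p - 1 ≤ n → ∀ k ∈ gen n,
      μ[fun ω => ε (2 * k) ω ^ 2 * ε (2 * k + 1) ω ^ 2|sigTree X n] =ᵐ[μ] fun _ => ν2

/-- Hypothesis (H.5). -/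
def H5 [MeasurableSpace Ω] (μ : Measure Ω) (X ε : ℕ → Ω → ℝ) (p : ℕ) : Prop :=
  (∀ n, p - 1 ≤ n → ∀ k ∈ gen (n + 1), MemLp (ε k) 8 μ) ∧
    ∀ᵐ ω ∂μ, BddAbove {x : ℝ | ∃ n, p - 1 ≤ n ∧ ∃ k ∈ gen (n + 1),
      x = (μ[fun ω' => ε k ω' ^ 8|sigTree X n]) ω}

/-- `S_n` is invertible for all `n ≥ p - 1`. -/
def SInvertible (X : ℕ → Ω → ℝ) (p : ℕ) : Prop :=
  ∀ n, p - 1 ≤ n → ∀ ω, IsUnit (Smat X p n ω).det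

/-! ### Auxiliary lemmas -/

section Aux

lemma memLp_two_integrable_mul [MeasurableSpace Ω] {μ : Measure Ω} {f g : Ω → ℝ}
    (hf : MemLp f 2 μ) (hg : MemLp g 2 μ) :
    Integrable (fun ω => f ω * g ω) μ := by
  have h : MemLp (f • g) 1 μ :=
    hg.smul hf
  exact memLp_one_iff_integrable.mp h

lemma mem_gen_iff {m k : ℕ} : k ∈ gen m ↔ 2 ^ m ≤ k ∧ k < 2 ^ (m + 1) := by
  simp [gen]

lemma mem_gen_log {k : ℕ} (hk : k ≠ 0) : k ∈ gen (Nat.log 2 k) :=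
  mem_gen_iff.2 ⟨Nat.pow_log_le_self 2 hk, Nat.lt_pow_succ_log_self one_lt_two k⟩

lemma le_log_of_pow_le {q k : ℕ} (h : 2 ^ q ≤ k) : q ≤ Nat.log 2 k := by
  have hk : k ≠ 0 := by
    have : (1 : ℕ) ≤ 2 ^ q := Nat.one_le_two_pow
    omega
  exact (Nat.le_log_iff_pow_le one_lt_two hk).2 h

lemma mem_treeFrom_iff {n q k : ℕ} : k ∈ treeFrom n q ↔ 2 ^ q ≤ k ∧ k ≤ 2 ^ (n + 1) - 1 := by
  have h1 : (1 : ℕ) ≤ 2 ^ q := Nat.one_le_two_pow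
  simp only [treeFrom, tree, Finset.mem_filter, Finset.mem_Icc]
  omega

lemma log_two_mul_add_one {u : ℕ} (hu : 1 ≤ u) :
    Nat.log 2 (2 * u + 1) = Nat.log 2 (2 * u) := by
  set m := Nat.log 2 (2 * u) with hm
  have h1 : 2 ^ m ≤ 2 * u := Nat.pow_log_le_self 2 (by omega)
  have h2 : 2 * u < 2 ^ (m + 1) := Nat.lt_pow_succ_log_self one_lt_two _
  have h3 : (2 : ℕ) ^ (m + 1) = 2 * 2 ^ m := by rw [pow_succ]; ring
  exact Nat.log_eq_of_pow_le_of_lt_pow (by omega) (by omega)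

lemma log_eq_of_sibling {k l : ℕ} (hk : 2 ≤ k) (hne : k ≠ l) (hpar : k / 2 = l / 2) :
    Nat.log 2 l = Nat.log 2 k := by
  have hu1 : 1 ≤ k / 2 := by omega
  have hcase : (k = 2 * (k / 2) ∧ l = 2 * (k / 2) + 1) ∨
      (k = 2 * (k / 2) + 1 ∧ l = 2 * (k / 2)) := by omega
  rcases hcase with ⟨hk', hl'⟩ | ⟨hk', hl'⟩
  · rw [hl', log_two_mul_add_one hu1, ← hk']
  · rw [hl', ← log_two_mul_add_one hu1, ← hk']

variable {Ω : Type*}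

lemma tree_mono {n m : ℕ} (h : n ≤ m) : tree n ⊆ tree m :=
  Finset.Icc_subset_Icc_right
    (Nat.sub_le_sub_right (Nat.pow_le_pow_right (by norm_num) (by omega)) 1)

lemma sigTree_mono [MeasurableSpace Ω] (X : ℕ → Ω → ℝ) {n m : ℕ} (h : n ≤ m) :
    sigTree X n ≤ sigTree X m :=
  biSup_mono fun _ hk => tree_mono h hk

lemma measurable_X_sigTree [MeasurableSpace Ω] {X : ℕ → Ω → ℝ} {i m : ℕ} (hi : i ∈ tree m) :
    Measurable[sigTree X m] (X i) :=
  Measurable.of_comap_le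
    (le_biSup (f := fun k => MeasurableSpace.comap (X k) inferInstance) hi)

lemma eps_measurable_sigTree [MeasurableSpace Ω] {X ε : ℕ → Ω → ℝ} {p : ℕ} {a b : ℕ → ℝ}
    (hp : 1 ≤ p)
    (hdyn : ∀ n, 2 ^ (p - 1) ≤ n → ∀ ω,
      X (2 * n) ω = a 0 + (∑ k ∈ Finset.Icc 1 p, a k * X (n / 2 ^ (k - 1)) ω) + ε (2 * n) ω ∧
        X (2 * n + 1) ω =
          b 0 + (∑ k ∈ Finset.Icc 1 p, b k * X (n / 2 ^ (k - 1)) ω) + ε (2 * n + 1) ω)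
    {k : ℕ} (hk : 2 ^ p ≤ k) :
    Measurable[sigTree X (Nat.log 2 k)] (ε k) := by
  set m := Nat.log 2 k with hm
  set u := k / 2 with hu
  have hpp : (2 : ℕ) ^ (p - 1) * 2 = 2 ^ p := by
    rw [← pow_succ]; congr 1; omega
  have hu2 : 2 ^ (p - 1) ≤ u := by
    rw [hu, Nat.le_div_iff_mul_le (by norm_num : 0 < 2)]; omega
  have h1p : (1 : ℕ) ≤ 2 ^ (p - 1) := Nat.one_le_two_pow
  have hk1 : 1 ≤ k := le_trans Nat.one_le_two_pow hk
  have hlt : k < 2 ^ (m + 1) := Nat.lt_pow_succ_log_self one_lt_two k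
  have hXk : Measurable[sigTree X m] (X k) := by
    apply measurable_X_sigTree
    simp only [tree, Finset.mem_Icc]
    omega
  have hXu : ∀ j ∈ Finset.Icc 1 p, Measurable[sigTree X m] (X (u / 2 ^ (j - 1))) := by
    intro j hj
    rw [Finset.mem_Icc] at hj
    apply measurable_X_sigTree
    have h1 : 2 ^ (j - 1) ≤ u :=
      le_trans (Nat.pow_le_pow_right (by norm_num) (by omega)) hu2
    have h2 : 1 ≤ u / 2 ^ (j - 1) := (Nat.one_le_div_iff (Nat.pow_pos (by norm_num))).2 h1
    have h3 : u / 2 ^ (j - 1) ≤ k := le_trans (Nat.div_le_self _ _) (by omega)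
    simp only [tree, Finset.mem_Icc]
    omega
  have hodd : k = 2 * u ∨ k = 2 * u + 1 := by omega
  rcases hodd with h | h
  · have heq : ε k = fun ω =>
        X k ω - (a 0 + ∑ j ∈ Finset.Icc 1 p, a j * X (u / 2 ^ (j - 1)) ω) := by
      funext ω
      have h' := (hdyn u hu2 ω).1
      rw [h] at *
      linarith [h']
    rw [heq]
    exact hXk.sub (measurable_const.add
      (Finset.measurable_sum _ fun j hj => ((hXu j hj).const_mul (a j))))
  · have heq : ε k = fun ω =>
        X k ω - (b 0 + ∑ j ∈ Finset.Icc 1 p, b j * X (u / 2 ^ (j - 1)) ω) := by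
      funext ω
      have h' := (hdyn u hu2 ω).2
      rw [h] at *
      linarith [h']
    rw [heq]
    exact hXk.sub (measurable_const.add
      (Finset.measurable_sum _ fun j hj => ((hXu j hj).const_mul (b j))))

lemma eps_memLp [MeasurableSpace Ω] {μ : Measure Ω} {X ε : ℕ → Ω → ℝ} {p : ℕ} {σ2 : ℝ}
    (hp : 1 ≤ p) (h1 : H1 μ X ε p σ2) {k : ℕ} (hk : 2 ^ p ≤ k) :
    MemLp (ε k) 2 μ := by
  have hk0 : k ≠ 0 := by
    have : (1 : ℕ) ≤ 2 ^ p := Nat.one_le_two_pow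
    omega
  have hm : p ≤ Nat.log 2 k := le_log_of_pow_le hk
  refine (h1.2 (Nat.log 2 k - 1) (by omega) k ?_).1
  have h' : Nat.log 2 k - 1 + 1 = Nat.log 2 k := by omega
  rw [h']
  exact mem_gen_log hk0

lemma condexp_eps_zero [m0 : MeasurableSpace Ω] {μ : Measure Ω} {X ε : ℕ → Ω → ℝ}
    {p : ℕ} {σ2 : ℝ} (hp : 1 ≤ p) (h1 : H1 μ X ε p σ2) {k : ℕ} (hk : 2 ^ p ≤ k) :
    μ[ε k|sigTree X (Nat.log 2 k - 1)] =ᵐ[μ] 0 := by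
  have hk0 : k ≠ 0 := by
    have : (1 : ℕ) ≤ 2 ^ p := Nat.one_le_two_pow
    omega
  have hm : p ≤ Nat.log 2 k := le_log_of_pow_le hk
  refine (h1.2 (Nat.log 2 k - 1) (by omega) k ?_).2.1
  have h' : Nat.log 2 k - 1 + 1 = Nat.log 2 k := by omega
  rw [h']
  exact mem_gen_log hk0

/-- a.e. independence under the conditional kernel, from conditional independence. -/
lemma ae_indepFun_of_condIndepFun {m' : MeasurableSpace Ω} [m0 : MeasurableSpace Ω]
    [StandardBorelSpace Ω] {μ : Measure Ω} [IsFiniteMeasure μ] (hm' : m' ≤ m0)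
    {f g : Ω → ℝ} (hfm : Measurable f) (hgm : Measurable g)
    (h : CondIndepFun m' hm' f g μ) :
    ∀ᵐ ω ∂μ, IndepFun f g (condExpKernel μ m' ω) := by
  have h' : ∀ᵐ ω ∂μ, ∀ q r : ℚ,
      condExpKernel μ m' ω (f ⁻¹' Set.Iio (q : ℝ) ∩ g ⁻¹' Set.Iio (r : ℝ))
        = condExpKernel μ m' ω (f ⁻¹' Set.Iio (q : ℝ)) *
            condExpKernel μ m' ω (g ⁻¹' Set.Iio (r : ℝ)) := by
    rw [ae_all_iff]
    intro q
    rw [ae_all_iff]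
    intro r
    exact ae_of_ae_trim hm'
      (h _ _ ⟨Set.Iio (q : ℝ), measurableSet_Iio, rfl⟩
        ⟨Set.Iio (r : ℝ), measurableSet_Iio, rfl⟩)
  filter_upwards [h'] with ω hω
  rw [IndepFun_iff_Indep]
  have hbor : (inferInstance : MeasurableSpace ℝ)
      = MeasurableSpace.generateFrom (⋃ a : ℚ, {Set.Iio (a : ℝ)}) :=
    BorelSpace.measurable_eq.trans Real.borel_eq_generateFrom_Iio_rat
  have hcomap : ∀ (φ : Ω → ℝ), MeasurableSpace.comap φ inferInstance
      = MeasurableSpace.generateFrom {s : Set Ω | ∃ t ∈ ⋃ a : ℚ, {Set.Iio (a : ℝ)}, φ ⁻¹' t = s} := by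
    intro φ
    conv_lhs => rw [hbor]
    rw [MeasurableSpace.comap_generateFrom]
    congr
  refine ProbabilityTheory.IndepSets.indep (hfm.comap_le) (hgm.comap_le)
    (Real.isPiSystem_Iio_rat.comap f) (Real.isPiSystem_Iio_rat.comap g)
    (hcomap f) (hcomap g) ?_
  rw [IndepSets_iff]
  rintro t1 t2 ⟨s1, hs1, rfl⟩ ⟨s2, hs2, rfl⟩
  simp only [Set.mem_iUnion, Set.mem_singleton_iff] at hs1 hs2
  obtain ⟨q, rfl⟩ := hs1
  obtain ⟨r, rfl⟩ := hs2
  exact hω q r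

lemma integral_mul_eq_zero_of_condIndepFun {m' : MeasurableSpace Ω} [m0 : MeasurableSpace Ω]
    [StandardBorelSpace Ω] {μ : Measure Ω} [IsProbabilityMeasure μ] (hm' : m' ≤ m0)
    {f g : Ω → ℝ} (hfm : Measurable f) (hgm : Measurable g)
    (hf : MemLp f 2 μ) (hg : MemLp g 2 μ)
    (hind : CondIndepFun m' hm' f g μ) (hf0 : μ[f|m'] =ᵐ[μ] 0) :
    ∫ ω, f ω * g ω ∂μ = 0 := by
  have hfg : Integrable (fun ω => f ω * g ω) μ := memLp_two_integrable_mul hf hg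
  have hfi : Integrable f μ := hf.integrable one_le_two
  have hgi : Integrable g μ := hg.integrable one_le_two
  have hk1 := condExp_ae_eq_integral_condExpKernel hm' hfg
  have hkf := condExp_ae_eq_integral_condExpKernel hm' hfi
  have hIndep := ae_indepFun_of_condIndepFun hm' hfm hgm hind
  have hfk := hfi.condExpKernel_ae (m := m')
  have hgk := hgi.condExpKernel_ae (m := m')
  have hzero : μ[(fun ω => f ω * g ω)|m'] =ᵐ[μ] 0 := by
    filter_upwards [hk1, hkf, hIndep, hfk, hgk, hf0] with ω h1 h2 h3 h4 h5 h6
    rw [h1]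
    have hmul : ∫ y, f y * g y ∂condExpKernel μ m' ω
        = (∫ y, f y ∂condExpKernel μ m' ω) * ∫ y, g y ∂condExpKernel μ m' ω :=
      h3.integral_mul_eq_mul_integral h4.aestronglyMeasurable h5.aestronglyMeasurable
    have hzf : ∫ y, f y ∂condExpKernel μ m' ω = 0 := by
      rw [← h2, h6]; rfl
    simp only [Pi.zero_apply]
    rw [hmul, hzf, zero_mul]
  rw [← integral_condExp hm' (f := fun ω => f ω * g ω), integral_congr_ae hzero]
  simp

end Aux

theorem noise_average_tendsto_zero {Ω : Type*} [m0 : MeasurableSpace Ω] [StandardBorelSpace Ω]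
    (μ : Measure Ω) [IsProbabilityMeasure μ]
    (p : ℕ) (X ε : ℕ → Ω → ℝ) (a b : ℕ → ℝ) (σ2 ρ : ℝ)
    (hsig : ∀ n, sigTree X n ≤ m0)
    (hmodel : BARmodel μ X ε p a b)
    (h1 : H1 μ X ε p σ2)
    (h2 : H2 μ X ε p σ2 ρ hsig) :
    ∀ᵐ ω ∂μ, Tendsto
      (fun n : ℕ => ((tree n).card : ℝ)⁻¹ * ∑ k ∈ treeFrom n p, ε k ω) atTop (𝓝 0) := by
  obtain ⟨hp, hXmeas, hεmeas, hdyn, hinit, hA, hB⟩ := hmodel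
  have hσpos : 0 < σ2 := h1.1
  have hρ : |ρ| < σ2 := h2.1
  have h1p : (1 : ℕ) ≤ 2 ^ p := Nat.one_le_two_pow
  have h2p : (2 : ℕ) ≤ 2 ^ p := by
    calc (2 : ℕ) = 2 ^ 1 := by norm_num
    _ ≤ 2 ^ p := Nat.pow_le_pow_right (by norm_num) hp
  have hL2 : ∀ k, 2 ^ p ≤ k → MemLp (ε k) 2 μ := fun k hk => eps_memLp hp h1 hk
  have hintmul : ∀ k l, 2 ^ p ≤ k → 2 ^ p ≤ l →
      Integrable (fun ω => ε k ω * ε l ω) μ :=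
    fun k l hk hl => memLp_two_integrable_mul (hL2 k hk) (hL2 l hl)
  -- generation membership helper
  have hgen : ∀ k, 2 ^ p ≤ k → k ∈ gen (Nat.log 2 k - 1 + 1) := by
    intro k hk
    have hk0 : k ≠ 0 := by omega
    have hm : p ≤ Nat.log 2 k := le_log_of_pow_le hk
    have h' : Nat.log 2 k - 1 + 1 = Nat.log 2 k := by omega
    rw [h']
    exact mem_gen_log hk0
  -- diagonal terms
  have hdiag : ∀ k, 2 ^ p ≤ k → ∫ ω, ε k ω * ε k ω ∂μ = σ2 := by
    intro k hk
    have hm : p ≤ Nat.log 2 k := le_log_of_pow_le hk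
    set n := Nat.log 2 k - 1 with hn
    have hc := (h1.2 n (by omega) k (hgen k hk)).2.2
    have hint2 : Integrable (fun ω => ε k ω ^ 2) μ := by
      have := hintmul k k hk hk
      simpa [pow_two] using this
    calc ∫ ω, ε k ω * ε k ω ∂μ = ∫ ω, ε k ω ^ 2 ∂μ := by simp_rw [pow_two]
      _ = ∫ ω, (μ[fun ω => ε k ω ^ 2|sigTree X n]) ω ∂μ :=
        (integral_condExp (hsig n) (f := fun ω => ε k ω ^ 2)).symm
      _ = ∫ _, σ2 ∂μ := integral_congr_ae hc
      _ = σ2 := by simp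
  -- sibling terms
  have hsib : ∀ k l, 2 ^ p ≤ k → 2 ^ p ≤ l → k ≠ l → k / 2 = l / 2 →
      ∫ ω, ε k ω * ε l ω ∂μ = ρ := by
    intro k l hk hl hne hpar
    have hll : Nat.log 2 l = Nat.log 2 k := log_eq_of_sibling (by omega) hne hpar
    have hm : p ≤ Nat.log 2 k := le_log_of_pow_le hk
    set n := Nat.log 2 k - 1 with hn
    have hlgen : l ∈ gen (n + 1) := by
      have := hgen l hl
      rwa [hll] at this
    have hc := ((h2.2 n (by omega) k (hgen k hk) l hlgen hne).1 hpar)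
    calc ∫ ω, ε k ω * ε l ω ∂μ
        = ∫ ω, (μ[fun ω => ε k ω * ε l ω|sigTree X n]) ω ∂μ :=
        (integral_condExp (hsig n) (f := fun ω => ε k ω * ε l ω)).symm
      _ = ∫ _, ρ ∂μ := integral_congr_ae hc
      _ = ρ := by simp
  -- cross-generation terms
  have hcross : ∀ k l, 2 ^ p ≤ k → 2 ^ p ≤ l → Nat.log 2 k < Nat.log 2 l →
      ∫ ω, ε k ω * ε l ω ∂μ = 0 := by
    intro k l hk hl hlt
    have hmk : p ≤ Nat.log 2 k := le_log_of_pow_le hk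
    set n := Nat.log 2 l - 1 with hn
    have hmeas : StronglyMeasurable[sigTree X n] (ε k) :=
      ((eps_measurable_sigTree hp hdyn hk).mono (sigTree_mono X (by omega)) le_rfl
        ).stronglyMeasurable
    have hzero : μ[ε l|sigTree X n] =ᵐ[μ] 0 := condexp_eps_zero hp h1 hl
    have hint : Integrable (fun ω => ε k ω * ε l ω) μ := hintmul k l hk hl
    have hint' : Integrable (ε k * ε l) μ := hint
    have hmul := condExp_mul_of_stronglyMeasurable_left hmeas hint' ((hL2 l hl).integrable one_le_two)
    have hcz : μ[(fun ω => ε k ω * ε l ω)|sigTree X n] =ᵐ[μ] 0 := by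
      have : μ[ε k * ε l|sigTree X n] =ᵐ[μ] 0 := by
        filter_upwards [hmul, hzero] with ω h1' h2'
        rw [h1']
        simp only [Pi.mul_apply, Pi.zero_apply] at h2' ⊢
        rw [h2', mul_zero]
      exact this
    calc ∫ ω, ε k ω * ε l ω ∂μ
        = ∫ ω, (μ[fun ω => ε k ω * ε l ω|sigTree X n]) ω ∂μ :=
        (integral_condExp (hsig n) (f := fun ω => ε k ω * ε l ω)).symm
      _ = 0 := by rw [integral_congr_ae hcz]; simp
  -- same generation, different parents
  have hcind : ∀ k l, 2 ^ p ≤ k → 2 ^ p ≤ l → Nat.log 2 k = Nat.log 2 l → k / 2 ≠ l / 2 →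
      ∫ ω, ε k ω * ε l ω ∂μ = 0 := by
    intro k l hk hl heq hpar
    have hne : k ≠ l := fun h => hpar (by rw [h])
    have hm : p ≤ Nat.log 2 k := le_log_of_pow_le hk
    set n := Nat.log 2 k - 1 with hn
    have hlgen : l ∈ gen (n + 1) := by
      have := hgen l hl
      have h' : Nat.log 2 l - 1 = n := by omega
      rwa [h'] at this
    have hind := (h2.2 n (by omega) k (hgen k hk) l hlgen hne).2 hpar
    exact integral_mul_eq_zero_of_condIndepFun (hsig n) (hεmeas k) (hεmeas l)
      (hL2 k hk) (hL2 l hl) hind (condexp_eps_zero hp h1 hk)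
  -- the key bound on each covariance term
  have hkey : ∀ k l, 2 ^ p ≤ k → 2 ^ p ≤ l →
      |∫ ω, ε k ω * ε l ω ∂μ| ≤ if l / 2 = k / 2 then σ2 else 0 := by
    intro k l hk hl
    by_cases hpar : l / 2 = k / 2
    · rw [if_pos hpar]
      by_cases hne : k = l
      · rw [hne, hdiag l hl, abs_of_pos hσpos]
      · rw [hsib k l hk hl hne hpar.symm]
        exact le_of_lt hρ
    · rw [if_neg hpar]
      rcases lt_trichotomy (Nat.log 2 k) (Nat.log 2 l) with h | h | h
      · rw [hcross k l hk hl h, abs_zero]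
      · rw [hcind k l hk hl h (fun h' => hpar h'.symm), abs_zero]
      · have : ∫ ω, ε k ω * ε l ω ∂μ = ∫ ω, ε l ω * ε k ω ∂μ := by
          congr 1; funext ω; ring
        rw [this, hcross l k hl hk h, abs_zero]
  -- variance bound over the tree
  have hvar : ∀ n : ℕ, ∫ ω, (∑ k ∈ treeFrom n p, ε k ω) ^ 2 ∂μ
      ≤ 2 * σ2 * (2 : ℝ) ^ (n + 1) := by
    intro n
    have hmem : ∀ k ∈ treeFrom n p, 2 ^ p ≤ k := fun k hk => (mem_treeFrom_iff.1 hk).1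
    have hexp : ∫ ω, (∑ k ∈ treeFrom n p, ε k ω) ^ 2 ∂μ
        = ∑ k ∈ treeFrom n p, ∑ l ∈ treeFrom n p, ∫ ω, ε k ω * ε l ω ∂μ := by
      have heq : ∀ ω, (∑ k ∈ treeFrom n p, ε k ω) ^ 2
          = ∑ k ∈ treeFrom n p, ∑ l ∈ treeFrom n p, ε k ω * ε l ω := fun ω => by
        rw [pow_two, Finset.sum_mul_sum]
      rw [integral_congr_ae (Eventually.of_forall heq)]
      rw [integral_finset_sum _ fun k hk =>
        integrable_finset_sum _ fun l hl => hintmul k l (hmem k hk) (hmem l hl)]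
      exact Finset.sum_congr rfl fun k hk =>
        integral_finset_sum _ fun l hl => hintmul k l (hmem k hk) (hmem l hl)
    rw [hexp]
    have hstep1 : ∑ k ∈ treeFrom n p, ∑ l ∈ treeFrom n p, ∫ ω, ε k ω * ε l ω ∂μ
        ≤ ∑ k ∈ treeFrom n p, ∑ l ∈ treeFrom n p,
            (if l / 2 = k / 2 then σ2 else 0) := by
      refine Finset.sum_le_sum fun k hk => Finset.sum_le_sum fun l hl => ?_
      exact le_trans (le_abs_self _) (hkey k l (hmem k hk) (hmem l hl))
    have hstep2 : ∀ k ∈ treeFrom n p,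
        (∑ l ∈ treeFrom n p, if l / 2 = k / 2 then σ2 else 0) ≤ 2 * σ2 := by
      intro k _
      rw [← Finset.sum_filter, Finset.sum_const, nsmul_eq_mul]
      have hsub : Finset.filter (fun l => l / 2 = k / 2) (treeFrom n p)
          ⊆ {2 * (k / 2), 2 * (k / 2) + 1} := by
        intro l hl
        rw [Finset.mem_filter] at hl
        have := hl.2
        simp only [Finset.mem_insert, Finset.mem_singleton]
        omega
      have hcard : (Finset.filter (fun l => l / 2 = k / 2) (treeFrom n p)).card ≤ 2 := by
        refine le_trans (Finset.card_le_card hsub) ?_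
        refine le_trans (Finset.card_insert_le _ _) ?_
        simp
      have hcard' : ((Finset.filter (fun l => l / 2 = k / 2) (treeFrom n p)).card : ℝ) ≤ 2 := by
        exact_mod_cast hcard
      nlinarith [hσpos]
    have hcardT : ((treeFrom n p).card : ℝ) ≤ (2 : ℝ) ^ (n + 1) := by
      have h1' : (treeFrom n p).card ≤ (tree n).card := Finset.card_filter_le _ _
      have h2' : (tree n).card = 2 ^ (n + 1) - 1 := by
        rw [tree, Nat.card_Icc]
        omega
      rw [h2'] at h1'
      have hone : (1 : ℕ) ≤ 2 ^ n := Nat.one_le_two_pow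
      have h3' : (treeFrom n p).card ≤ 2 ^ (n + 1) := by omega
      have h4' := (Nat.cast_le (α := ℝ)).2 h3'
      push_cast at h4'
      linarith
    have hsum2 : (∑ k ∈ treeFrom n p, ∑ l ∈ treeFrom n p, if l / 2 = k / 2 then σ2 else 0)
        ≤ ((treeFrom n p).card : ℝ) * (2 * σ2) := by
      refine le_trans (Finset.sum_le_sum hstep2) ?_
      rw [Finset.sum_const, nsmul_eq_mul]
    have hfin : ((treeFrom n p).card : ℝ) * (2 * σ2) ≤ 2 * σ2 * 2 ^ (n + 1) := by
      nlinarith [hσpos, hcardT, Nat.cast_nonneg (α := ℝ) (treeFrom n p).card]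
    linarith [hstep1, hsum2, hfin]
  -- the averaged process
  set F : ℕ → Ω → ℝ := fun n ω => ((tree n).card : ℝ)⁻¹ * ∑ k ∈ treeFrom n p, ε k ω with hF
  have hcard_tree : ∀ n : ℕ, (2 : ℝ) ^ n ≤ ((tree n).card : ℝ) := by
    intro n
    have h2' : (tree n).card = 2 ^ (n + 1) - 1 := by
      rw [tree, Nat.card_Icc]
      omega
    have h3' : (2 : ℕ) ^ n ≤ 2 ^ (n + 1) - 1 := by
      have : (2 : ℕ) ^ (n + 1) = 2 * 2 ^ n := by rw [pow_succ]; ring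
      have hpos : (1 : ℕ) ≤ 2 ^ n := Nat.one_le_two_pow
      omega
    rw [h2']
    calc (2 : ℝ) ^ n = ((2 ^ n : ℕ) : ℝ) := by push_cast; ring
      _ ≤ (((2 : ℕ) ^ (n + 1) - 1 : ℕ) : ℝ) := by exact_mod_cast h3'
  have hcard_pos : ∀ n : ℕ, (0 : ℝ) < ((tree n).card : ℝ) :=
    fun n => lt_of_lt_of_le (by positivity) (hcard_tree n)
  have hSL2 : ∀ n : ℕ, MemLp (fun ω => ∑ k ∈ treeFrom n p, ε k ω) 2 μ := by
    intro n
    have h' := memLp_finset_sum' (treeFrom n p) (f := fun k => ε k)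
      fun k hk => hL2 k (mem_treeFrom_iff.1 hk).1
    have heq : (∑ x ∈ treeFrom n p, ε x) = fun ω => ∑ k ∈ treeFrom n p, ε k ω := by
      funext ω
      simp [Finset.sum_apply]
    rw [← heq]
    exact h'
  have hFL2 : ∀ n : ℕ, MemLp (F n) 2 μ := fun n =>
    (hSL2 n).const_mul _
  have hFint2 : ∀ n : ℕ, Integrable (fun ω => F n ω ^ 2) μ := fun n =>
    (hFL2 n).integrable_sq
  have hFmeas : ∀ n : ℕ, Measurable (F n) := fun n =>
    (Finset.measurable_sum _ fun k _ => hεmeas k).const_mul _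
  -- the L² bound for F n
  have hFbound : ∀ n : ℕ, ∫ ω, F n ω ^ 2 ∂μ ≤ 4 * σ2 * (1 / 2 : ℝ) ^ n := by
    intro n
    have hc := hcard_pos n
    have heq : ∀ ω, F n ω ^ 2
        = (((tree n).card : ℝ)⁻¹) ^ 2 * (∑ k ∈ treeFrom n p, ε k ω) ^ 2 := fun ω => by
      rw [hF]; ring
    have hSint : Integrable (fun ω => (∑ k ∈ treeFrom n p, ε k ω) ^ 2) μ :=
      (hSL2 n).integrable_sq
    have h' : ∫ ω, F n ω ^ 2 ∂μ
        = (((tree n).card : ℝ)⁻¹) ^ 2 * ∫ ω, (∑ k ∈ treeFrom n p, ε k ω) ^ 2 ∂μ := by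
      rw [integral_congr_ae (Eventually.of_forall heq), integral_const_mul]
    rw [h']
    have hSnonneg : 0 ≤ ∫ ω, (∑ k ∈ treeFrom n p, ε k ω) ^ 2 ∂μ :=
      integral_nonneg fun ω => sq_nonneg _
    have hinv : (((tree n).card : ℝ)⁻¹) ^ 2 ≤ ((2 : ℝ) ^ n)⁻¹ ^ 2 := by
      apply pow_le_pow_left₀ (by positivity)
      exact inv_anti₀ (by positivity) (hcard_tree n)
    calc (((tree n).card : ℝ)⁻¹) ^ 2 * ∫ ω, (∑ k ∈ treeFrom n p, ε k ω) ^ 2 ∂μ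
        ≤ ((2 : ℝ) ^ n)⁻¹ ^ 2 * (2 * σ2 * (2 : ℝ) ^ (n + 1)) := by
          apply mul_le_mul hinv (hvar n) hSnonneg (by positivity)
      _ = 4 * σ2 * (1 / 2 : ℝ) ^ n := by
          rw [pow_succ]
          field_simp
          ring_nf
          rw [one_div, inv_pow]
          field_simp
          ring
  -- summability of the lintegrals
  have hlint : ∀ n : ℕ, ∫⁻ ω, ENNReal.ofReal (F n ω ^ 2) ∂μ
      ≤ ENNReal.ofReal (4 * σ2) * ENNReal.ofReal (1 / 2) ^ n := by
    intro n
    rw [← ofReal_integral_eq_lintegral_ofReal (hFint2 n)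
      (Eventually.of_forall fun ω => sq_nonneg _)]
    calc ENNReal.ofReal (∫ ω, F n ω ^ 2 ∂μ)
        ≤ ENNReal.ofReal (4 * σ2 * (1 / 2 : ℝ) ^ n) := ENNReal.ofReal_le_ofReal (hFbound n)
      _ = ENNReal.ofReal (4 * σ2) * ENNReal.ofReal ((1 / 2 : ℝ) ^ n) :=
          ENNReal.ofReal_mul (by positivity)
      _ = ENNReal.ofReal (4 * σ2) * ENNReal.ofReal (1 / 2) ^ n := by
          rw [ENNReal.ofReal_pow (by norm_num)]
  have htsum : ∑' n : ℕ, ∫⁻ ω, ENNReal.ofReal (F n ω ^ 2) ∂μ < ⊤ := by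
    refine lt_of_le_of_lt (ENNReal.tsum_le_tsum hlint) ?_
    rw [ENNReal.tsum_mul_left, ENNReal.tsum_geometric]
    refine ENNReal.mul_lt_top ENNReal.ofReal_lt_top ?_
    rw [ENNReal.inv_lt_top]
    exact tsub_pos_iff_lt.2 (ENNReal.ofReal_lt_one.2 (by norm_num))
  have hswap : ∫⁻ ω, ∑' n : ℕ, ENNReal.ofReal (F n ω ^ 2) ∂μ
      = ∑' n : ℕ, ∫⁻ ω, ENNReal.ofReal (F n ω ^ 2) ∂μ :=
    lintegral_tsum fun n => (((hFmeas n).pow_const 2).ennreal_ofReal).aemeasurable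
  have hae : ∀ᵐ ω ∂μ, ∑' n : ℕ, ENNReal.ofReal (F n ω ^ 2) < ⊤ := by
    refine ae_lt_top'
      ((Measurable.ennreal_tsum fun n =>
        ((hFmeas n).pow_const 2).ennreal_ofReal).aemeasurable) ?_
    rw [hswap]
    exact htsum.ne
  filter_upwards [hae] with ω hω
  have hsum : Summable fun n => F n ω ^ 2 := by
    have h' := ENNReal.summable_toReal hω.ne
    refine h'.congr fun n => ?_
    rw [ENNReal.toReal_ofReal (sq_nonneg _)]
  have h0 : Tendsto (fun n => F n ω ^ 2) atTop (𝓝 0) := hsum.tendsto_atTop_zero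
  have habs : Tendsto (fun n => |F n ω|) atTop (𝓝 0) := by
    have h' := h0.sqrt
    rw [Real.sqrt_zero] at h'
    exact h'.congr fun n => Real.sqrt_sq_eq_abs _
  have hFten : Tendsto (fun n => F n ω) atTop (𝓝 0) :=
    (tendsto_zero_iff_abs_tendsto_zero _).2 habs
  exact hFten.congr fun n => by rw [hF]

end BARpaper
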